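/- Let P be a polynomial of degree d ≥ 1 and let ρ, α > 0 be constants such that α·|z|^d ≤ |P(z)| for all z ∈ ℂ with |z| ≥ ρ. Then for every r > 0, every z ∈ ℂ and every y ∈ ℂ with y ≠ 0, the Gaussian measure of the set {t ∈ ℂ : |(1/y)·P(z+yt)| < r} is at most π·ρ²/|y|² + π·(r/α)^{2/d}·|y|^{(2/d) − 2}. -/

import Mathlib

open MeasureTheory Polynomial ENNReal

/-- The standard Gaussian probability measure on ℂ ≅ ℝ²:
    γ(U) = (1/(2π)) ∫_U e^{−|w|²/2} dλ(w). -/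
noncomputable def gaussianMeasureC : Measure ℂ :=
  MeasureTheory.volume.withDensity
    (fun w => ENNReal.ofReal ((2 * Real.pi)⁻¹ * Real.exp (-(‖w‖) ^ 2 / 2)))

theorem stmt3 (P : Polynomial ℂ) (d : ℕ) (hd : 1 ≤ d) (hdeg : P.natDegree = d)
    (ρ α : ℝ) (hρ : 0 < ρ) (hα : 0 < α)
    (hbound : ∀ z : ℂ, ρ ≤ ‖z‖ → α * (‖z‖) ^ d ≤ ‖P.eval z‖)
    (r : ℝ) (hr : 0 < r) (z y : ℂ) (hy : y ≠ 0) :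
    gaussianMeasureC {t : ℂ | ‖y⁻¹ * P.eval (z + y * t)‖ < r} ≤
      ENNReal.ofReal (Real.pi * ρ ^ 2 / (‖y‖) ^ 2 +
        Real.pi * (r / α) ^ ((2 : ℝ) / d) * (‖y‖) ^ ((2 : ℝ) / d - 2)) := by
  have hApos : 0 < ‖y‖ := by simpa using norm_pos_iff.mpr hy
  set A := ‖y‖ with hA
  set R₂ : ℝ := (r * A / α) ^ ((1 : ℝ) / d) with hR₂
  have hR₂pos : 0 < R₂ := Real.rpow_pos_of_pos (by positivity) _
  have hdpos : (0 : ℝ) < d := by exact_mod_cast hd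
  -- gaussian ≤ volume on measurable sets
  have key : ∀ U : Set ℂ, MeasurableSet U → gaussianMeasureC U ≤ volume U := by
    intro U hU
    rw [gaussianMeasureC, withDensity_apply _ hU]
    calc ∫⁻ w in U, ENNReal.ofReal ((2 * Real.pi)⁻¹ * Real.exp (-(‖w‖) ^ 2 / 2)) ∂volume
        ≤ ∫⁻ w in U, (1:ℝ≥0∞) ∂volume := by
          refine lintegral_mono fun w => ?_
          rw [show (1 : ℝ≥0∞) = ENNReal.ofReal 1 by simp]
          refine ENNReal.ofReal_le_ofReal ?_
          have h1 : Real.exp (-(‖w‖) ^ 2 / 2) ≤ 1 := by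
            rw [Real.exp_le_one_iff]
            nlinarith [sq_nonneg (‖w‖)]
          have h2 : (2 * Real.pi)⁻¹ ≤ 1 := by
            rw [inv_le_one_iff₀]
            right; nlinarith [Real.pi_gt_three]
          nlinarith [Real.pi_pos, Real.exp_pos (-(‖w‖) ^ 2 / 2),
            inv_pos.mpr (by nlinarith [Real.pi_pos] : (0:ℝ) < 2 * Real.pi)]
      _ = volume U := by simp
  -- the inclusion
  have hsub : {t : ℂ | ‖y⁻¹ * P.eval (z + y * t)‖ < r} ⊆
      Metric.ball (-(z / y)) (ρ / A) ∪ Metric.ball (-(z / y)) (R₂ / A) := by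
    intro t ht
    simp only [Set.mem_setOf_eq, norm_mul, norm_inv] at ht
    have hP : ‖P.eval (z + y * t)‖ < r * A := by
      rw [inv_mul_lt_iff₀ hApos] at ht
      linarith [ht]
    have hdist : ∀ c : ℝ, ‖z + y * t‖ < c → t ∈ Metric.ball (-(z / y)) (c / A) := by
      intro c hc
      rw [Metric.mem_ball, Complex.dist_eq, lt_div_iff₀ hApos]
      have : ‖t - -(z / y)‖ * A = ‖z + y * t‖ := by
        rw [← norm_mul]
        congr 1
        field_simp
        ring
      rw [this]; exact hc
    by_cases hw : ‖z + y * t‖ < ρ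
    · exact Or.inl (hdist ρ hw)
    · right
      push_neg at hw
      have hb := hbound _ hw
      have hpow : (‖z + y * t‖) ^ d < r * A / α := by
        rw [lt_div_iff₀ hα]
        calc (‖z + y * t‖) ^ d * α = α * (‖z + y * t‖) ^ d := by ring
          _ ≤ ‖P.eval (z + y * t)‖ := hb
          _ < r * A := hP
      refine hdist _ ?_
      have h1 : ‖z + y * t‖ = ((‖z + y * t‖) ^ d) ^ ((1:ℝ)/d) := by
        rw [← Real.rpow_natCast (‖z + y * t‖) d, ← Real.rpow_mul (by positivity)]
        rw [mul_one_div, div_self (by positivity), Real.rpow_one]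
      rw [h1, hR₂]
      exact Real.rpow_lt_rpow (by positivity) hpow (by positivity)
  calc gaussianMeasureC {t : ℂ | ‖y⁻¹ * P.eval (z + y * t)‖ < r}
      ≤ gaussianMeasureC (Metric.ball (-(z / y)) (ρ / A) ∪ Metric.ball (-(z / y)) (R₂ / A)) :=
        measure_mono hsub
    _ ≤ volume (Metric.ball (-(z / y)) (ρ / A) ∪ Metric.ball (-(z / y)) (R₂ / A)) :=
        key _ (by measurability)
    _ ≤ volume (Metric.ball (-(z / y)) (ρ / A)) + volume (Metric.ball (-(z / y)) (R₂ / A)) :=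
        measure_union_le _ _
    _ = ENNReal.ofReal (Real.pi * (ρ / A) ^ 2) + ENNReal.ofReal (Real.pi * (R₂ / A) ^ 2) := by
        rw [Complex.volume_ball, Complex.volume_ball]
        rw [← ENNReal.ofReal_pow (by positivity), ← ENNReal.ofReal_pow (by positivity)]
        rw [← ENNReal.ofReal_coe_nnreal, NNReal.coe_real_pi]
        rw [← ENNReal.ofReal_mul (by positivity), ← ENNReal.ofReal_mul (by positivity)]
        ring_nf
    _ = ENNReal.ofReal (Real.pi * ρ ^ 2 / A ^ 2 +
        Real.pi * (r / α) ^ ((2 : ℝ) / d) * A ^ ((2 : ℝ) / d - 2)) := by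
        rw [← ENNReal.ofReal_add (by positivity) (by positivity)]
        congr 1
        have e1 : Real.pi * (ρ / A) ^ 2 = Real.pi * ρ ^ 2 / A ^ 2 := by
          field_simp
        have e2 : (R₂ / A) ^ 2 = (r / α) ^ ((2 : ℝ) / d) * A ^ ((2 : ℝ) / d - 2) := by
          rw [div_pow, hR₂]
          rw [← Real.rpow_natCast ((r * A / α) ^ ((1:ℝ)/d)) 2, ← Real.rpow_mul (by positivity)]
          rw [show (1:ℝ)/d * (2:ℕ) = 2/d by push_cast; ring]
          rw [show r * A / α = (r / α) * A by ring]
          rw [Real.mul_rpow (by positivity) (by positivity)]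
          rw [Real.rpow_sub hApos, Real.rpow_two]
          ring
        rw [e1, e2]
        ring
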